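/- For an n×n pairwise comparison matrix M with M_ij + M_ji = 1 for i≠j and entries in [0,1], if π is a permutation ordering the scores non-increasingly (τ_{π(1)} ≥ τ_{π(2)} ≥ ... ≥ τ_{π(n)}), then for every j ∈ [n], Σ_{i=1}^j τ_{π(i)} ≥ (1/(n-1)) · j(j-1)/2. -/

import Mathlib

/-- Partial sums of sorted Borda scores are lower bounded: Σ_{i=1}^k τ_{π(i)} ≥ k(k-1)/(2(n-1)). -/
theorem sorted_scores_partial_sum_lower_bound (n : ℕ) (hn : 2 ≤ n)
    (M : Fin n → Fin n → ℝ)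
    (hrange : ∀ i j, M i j ∈ Set.Icc (0:ℝ) 1)
    (hskew : ∀ i j, i ≠ j → M i j + M j i = 1)
    (τ : Fin n → ℝ)
    (hτ : ∀ i, τ i = (1/((n:ℝ)-1)) * ∑ j ∈ Finset.univ.erase i, M i j)
    (π : Equiv.Perm (Fin n))
    (hsort : ∀ i j : Fin n, i ≤ j → τ (π j) ≤ τ (π i)) :
    ∀ k : ℕ, k ≤ n →
      ∑ i ∈ Finset.univ.filter (fun i : Fin n => (i : ℕ) < k), τ (π i)
        ≥ (1/((n:ℝ)-1)) * ((k:ℝ) * ((k:ℝ)-1) / 2) := by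
  intro k hk
  rcases Nat.eq_zero_or_pos k with rfl | hkpos
  · simp
  have hc : (0:ℝ) ≤ 1/((n:ℝ)-1) := by
    apply div_nonneg zero_le_one
    have : (2:ℝ) ≤ (n:ℝ) := by exact_mod_cast hn
    linarith
  set F := Finset.univ.filter (fun i : Fin n => (i : ℕ) < k) with hF
  set S := F.image π with hS
  have hcardF : F.card = k := by
    have h : F = Finset.univ.map (Fin.castLEEmb hk) := by
      ext i
      simp only [hF, Finset.mem_filter, Finset.mem_univ, true_and, Finset.mem_map,
        Fin.castLEEmb_apply]
      constructor
      · intro hi; exact ⟨⟨i, hi⟩, rfl⟩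
      · rintro ⟨a, rfl⟩; exact a.2
    simp [h]
  have hcardS : S.card = k := by
    rw [hS, Finset.card_image_of_injective _ π.injective, hcardF]
  have hsum1 : ∑ i ∈ F, τ (π i) = ∑ i ∈ S, τ i := by
    rw [hS, Finset.sum_image (fun a _ b _ h => π.injective h)]
  -- T : off-diagonal sum over S
  set T := ∑ i ∈ S, ∑ j ∈ S.erase i, M i j with hT
  have hmono : ∀ i ∈ S, ∑ j ∈ S.erase i, M i j ≤ ∑ j ∈ Finset.univ.erase i, M i j := by
    intro i _
    apply Finset.sum_le_sum_of_subset_of_nonneg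
    · exact Finset.erase_subset_erase _ (Finset.subset_univ S)
    · intro j _ _; exact (hrange i j).1
  have hsymm : (∑ i ∈ S, ∑ j ∈ S.erase i, M j i) = T := by
    rw [hT]
    rw [Finset.sum_comm' (t' := S) (s' := fun j => S.erase j)]
    intro i j
    constructor
    · rintro ⟨hi, hj⟩
      exact ⟨Finset.mem_erase.2 ⟨fun h => (Finset.mem_erase.1 hj).1 h.symm, hi⟩,
        (Finset.mem_erase.1 hj).2⟩
    · rintro ⟨hi, hj⟩
      exact ⟨(Finset.mem_erase.1 hi).2, Finset.mem_erase.2 ⟨fun h => (Finset.mem_erase.1 hi).1 h.symm, hj⟩⟩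
  have h2T : 2 * T = (k:ℝ) * ((k:ℝ) - 1) := by
    have : 2 * T = ∑ i ∈ S, ∑ j ∈ S.erase i, (M i j + M j i) := by
      rw [two_mul]
      simp_rw [Finset.sum_add_distrib]
      rw [hsymm, hT]
    rw [this]
    have h1 : ∀ i ∈ S, ∑ j ∈ S.erase i, (M i j + M j i) = ((k:ℝ) - 1) := by
      intro i hi
      rw [Finset.sum_congr rfl (fun j hj => hskew i j (fun h => (Finset.mem_erase.1 hj).1 h.symm))]
      rw [Finset.sum_const, Finset.card_erase_of_mem hi, hcardS, nsmul_eq_mul, mul_one]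
      have : (1:ℕ) ≤ k := hkpos
      push_cast [Nat.cast_sub this]
      ring
    rw [Finset.sum_congr rfl h1, Finset.sum_const, hcardS, nsmul_eq_mul]
  have hTge : T = (k:ℝ) * ((k:ℝ) - 1) / 2 := by linarith
  calc ∑ i ∈ F, τ (π i) = ∑ i ∈ S, τ i := hsum1
    _ = (1/((n:ℝ)-1)) * ∑ i ∈ S, ∑ j ∈ Finset.univ.erase i, M i j := by
        rw [Finset.mul_sum]; exact Finset.sum_congr rfl (fun i _ => hτ i)
    _ ≥ (1/((n:ℝ)-1)) * T := by
        apply mul_le_mul_of_nonneg_left _ hc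
        exact Finset.sum_le_sum hmono
    _ = (1/((n:ℝ)-1)) * ((k:ℝ) * ((k:ℝ)-1) / 2) := by rw [hTge]
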